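/- Let X be a topological space and suppose V ⊆ X admits a U-representation, i.e., there exist sets U_n(V) (n ≥ 1) with V = ⋃_n U_n(V), U_n(V) ⊆ U_{n+1}(V), each U_{2n-1}(V) a zero-set of X and each U_{2n}(V) a cozero-set of X. Then there exists a continuous function f : X → [0,1] with V = coz(f) and f⁻¹([1/2^{n-1}, 1]) = U_{2n-1}(V) for every n ≥ 1. -/

import Mathlib

def IsZeroSet {X : Type*} [TopologicalSpace X] (S : Set X) : Prop :=
  ∃ f : X → ℝ, Continuous f ∧ (∀ x, f x ∈ Set.Icc (0:ℝ) 1) ∧ S = f ⁻¹' {0}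

def IsCozeroSet {X : Type*} [TopologicalSpace X] (S : Set X) : Prop :=
  ∃ f : X → ℝ, Continuous f ∧ (∀ x, f x ∈ Set.Icc (0:ℝ) 1) ∧ S = {x | f x ≠ 0}

set_option maxHeartbeats 1000000 in
theorem urepresentation_gives_function {X : Type*} [TopologicalSpace X]
    (V : Set X) (U : ℕ → Set X)
    (hunion : V = ⋃ n : ℕ, U (n + 1))
    (hmono : ∀ n, 1 ≤ n → U n ⊆ U (n + 1))
    (hodd : ∀ n, 1 ≤ n → IsZeroSet (U (2 * n - 1)))
    (heven : ∀ n, 1 ≤ n → IsCozeroSet (U (2 * n))) :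
    ∃ f : X → ℝ, Continuous f ∧ (∀ x, f x ∈ Set.Icc (0:ℝ) 1) ∧ V = {x | f x ≠ 0} ∧
      ∀ n, 1 ≤ n → f ⁻¹' Set.Icc ((1:ℝ) / 2 ^ (n - 1)) 1 = U (2 * n - 1) := by
  classical
  -- generalized monotonicity
  have hmono' : ∀ m k : ℕ, 1 ≤ m → m ≤ k → U m ⊆ U k := by
    intro m k hm hk
    induction k, hk using Nat.le_induction with
    | base => exact subset_rfl
    | succ k hk ih => exact ih.trans (hmono k (hm.trans hk))
  -- choose witnesses
  have hgex : ∀ n : ℕ, ∃ g : X → ℝ, Continuous g ∧ (∀ x, g x ∈ Set.Icc (0:ℝ) 1) ∧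
      (1 ≤ n → U (2 * n - 1) = g ⁻¹' {0}) := by
    intro n
    by_cases hn : 1 ≤ n
    · obtain ⟨g, hc, hm, hs⟩ := hodd n hn
      exact ⟨g, hc, hm, fun _ => hs⟩
    · exact ⟨fun _ => 1, continuous_const, fun _ => ⟨zero_le_one, le_refl 1⟩,
        fun h => absurd h hn⟩
  have hhex : ∀ n : ℕ, ∃ h : X → ℝ, Continuous h ∧ (∀ x, h x ∈ Set.Icc (0:ℝ) 1) ∧
      (1 ≤ n → U (2 * n) = {x | h x ≠ 0}) := by
    intro n
    by_cases hn : 1 ≤ n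
    · obtain ⟨h, hc, hm, hs⟩ := heven n hn
      exact ⟨h, hc, hm, fun _ => hs⟩
    · exact ⟨fun _ => 0, continuous_const, fun _ => ⟨le_refl 0, zero_le_one⟩,
        fun h => absurd h hn⟩
  choose g hgc hgm hgs using hgex
  choose h hhc hhm hhs using hhex
  -- U(2n-1) ⊆ U(2n)
  have hsub : ∀ n : ℕ, 1 ≤ n → U (2 * n - 1) ⊆ U (2 * n) := by
    intro n hn
    have h1 : (1:ℕ) ≤ 2 * n - 1 := by omega
    have h2 : 2 * n - 1 + 1 = 2 * n := by omega
    have := hmono (2 * n - 1) h1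
    rwa [h2] at this
  -- denominator positivity
  have hden : ∀ n : ℕ, 1 ≤ n → ∀ x : X, 0 < g n x + h n x := by
    intro n hn x
    rcases lt_or_eq_of_le (add_nonneg (hgm n x).1 (hhm n x).1) with hlt | heq
    · exact hlt
    · exfalso
      have hg0 : g n x = 0 := le_antisymm (by nlinarith [(hgm n x).1, (hhm n x).1]) (hgm n x).1
      have hh0 : h n x = 0 := le_antisymm (by nlinarith [(hgm n x).1, (hhm n x).1]) (hhm n x).1
      have hx1 : x ∈ U (2 * n - 1) := by rw [hgs n hn]; exact hg0
      have hx2 : x ∈ U (2 * n) := hsub n hn hx1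
      rw [hhs n hn] at hx2
      exact hx2 hh0
  set φ : ℕ → X → ℝ := fun n x => h n x / (g n x + h n x) with hφ
  -- basic properties of φ for 1 ≤ n
  have hφ01 : ∀ n : ℕ, 1 ≤ n → ∀ x, φ n x ∈ Set.Icc (0:ℝ) 1 := by
    intro n hn x
    constructor
    · exact div_nonneg (hhm n x).1 (hden n hn x).le
    · rw [div_le_one (hden n hn x)]
      nlinarith [(hgm n x).1]
  have hφ1 : ∀ n : ℕ, 1 ≤ n → ∀ x, (φ n x = 1 ↔ x ∈ U (2 * n - 1)) := by
    intro n hn x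
    rw [hφ]
    simp only
    rw [div_eq_one_iff_eq (hden n hn x).ne']
    constructor
    · intro he
      rw [hgs n hn]
      simp only [Set.mem_preimage, Set.mem_singleton_iff]
      linarith
    · intro hx
      rw [hgs n hn] at hx
      simp only [Set.mem_preimage, Set.mem_singleton_iff] at hx
      rw [hx]; ring
  have hφ0 : ∀ n : ℕ, 1 ≤ n → ∀ x, (φ n x = 0 ↔ x ∉ U (2 * n)) := by
    intro n hn x
    rw [hφ]
    simp only
    rw [div_eq_zero_iff]
    rw [hhs n hn]
    simp only [Set.mem_setOf_eq, not_not]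
    constructor
    · rintro (h0 | h0)
      · exact h0
      · exact absurd h0 (hden n hn x).ne'
    · exact fun h0 => Or.inl h0
  have hφcont : ∀ n : ℕ, 1 ≤ n → Continuous (φ n) := by
    intro n hn
    exact (hhc n).div ((hgc n).add (hhc n)) (fun x => (hden n hn x).ne')
  -- the function
  set f : X → ℝ := fun x => ∑' k : ℕ, (1 / 2 : ℝ) ^ (k + 1) * φ (k + 1) x with hf
  have hbound : ∀ (k : ℕ) (x : X), ‖(1 / 2 : ℝ) ^ (k + 1) * φ (k + 1) x‖ ≤ (1 / 2 : ℝ) ^ (k + 1) := by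
    intro k x
    rw [Real.norm_eq_abs, abs_mul, abs_of_nonneg (by positivity),
      abs_of_nonneg (hφ01 (k + 1) (by omega) x).1]
    nlinarith [(hφ01 (k + 1) (by omega) x).2, pow_pos (by norm_num : (0:ℝ) < 1/2) (k+1)]
  have hsumgeo : Summable (fun k : ℕ => (1 / 2 : ℝ) ^ (k + 1)) := by
    have := summable_geometric_two.mul_left (1 / 2 : ℝ)
    simpa [pow_succ, mul_comm] using this
  have htsumgeo : ∑' k : ℕ, (1 / 2 : ℝ) ^ (k + 1) = 1 := by
    have : ∑' k : ℕ, (1 / 2 : ℝ) ^ (k + 1) = (1/2) * ∑' k : ℕ, (1 / 2 : ℝ) ^ k := by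
      rw [← tsum_mul_left]
      congr 1
      ext k
      rw [pow_succ]; ring
    rw [this, tsum_geometric_two]; norm_num
  have hsummand : ∀ x : X, Summable (fun k : ℕ => (1 / 2 : ℝ) ^ (k + 1) * φ (k + 1) x) := by
    intro x
    exact Summable.of_norm_bounded hsumgeo (fun k => hbound k x)
  have hterm_nonneg : ∀ (k : ℕ) (x : X), 0 ≤ (1 / 2 : ℝ) ^ (k + 1) * φ (k + 1) x := by
    intro k x
    exact mul_nonneg (by positivity) (hφ01 (k + 1) (by omega) x).1
  have hf_nonneg : ∀ x, 0 ≤ f x := fun x => tsum_nonneg (fun k => hterm_nonneg k x)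
  have hf_le_one : ∀ x, f x ≤ 1 := by
    intro x
    rw [hf]
    calc ∑' k : ℕ, (1 / 2 : ℝ) ^ (k + 1) * φ (k + 1) x
        ≤ ∑' k : ℕ, (1 / 2 : ℝ) ^ (k + 1) := by
          apply Summable.tsum_le_tsum _ (hsummand x) hsumgeo
          intro k
          nlinarith [(hφ01 (k + 1) (by omega) x).2, pow_pos (by norm_num : (0:ℝ) < 1/2) (k+1),
            (hφ01 (k + 1) (by omega) x).1]
      _ = 1 := htsumgeo
  refine ⟨f, ?_, fun x => ⟨hf_nonneg x, hf_le_one x⟩, ?_, ?_⟩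
  · -- continuity
    rw [hf]
    exact continuous_tsum (fun k => continuous_const.mul (hφcont (k + 1) (by omega)))
      hsumgeo (fun k x => hbound k x)
  · -- V = coz f
    ext x
    simp only [Set.mem_setOf_eq]
    constructor
    · intro hx
      rw [hunion] at hx
      obtain ⟨m, hm⟩ := Set.mem_iUnion.mp hx
      have hxm : x ∈ U (2 * (m + 1) - 1) := hmono' (m + 1) (2 * (m + 1) - 1) (by omega) (by omega) hm
      have hφm : φ (m + 1) x = 1 := (hφ1 (m + 1) (by omega) x).mpr hxm
      have hle : (1 / 2 : ℝ) ^ (m + 1) * φ (m + 1) x ≤ f x := by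
        rw [hf]
        exact Summable.le_tsum (hsummand x) m (fun j _ => hterm_nonneg j x)
      rw [hφm, mul_one] at hle
      have : (0:ℝ) < (1 / 2 : ℝ) ^ (m + 1) := by positivity
      intro h0
      rw [h0] at hle
      linarith
    · intro hx
      by_contra hxV
      apply hx
      rw [hf]
      have : ∀ k : ℕ, (1 / 2 : ℝ) ^ (k + 1) * φ (k + 1) x = 0 := by
        intro k
        have hxn : x ∉ U (2 * (k + 1)) := by
          intro hxn
          apply hxV
          rw [hunion]
          apply Set.mem_iUnion.mpr
          exact ⟨2 * (k + 1) - 1, by rw [show 2 * (k + 1) - 1 + 1 = 2 * (k + 1) by omega]; exact hxn⟩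
        rw [(hφ0 (k + 1) (by omega) x).mpr hxn, mul_zero]
      simp only [this]
      exact tsum_zero
  · -- level sets
    intro n hn
    have hpow : (1:ℝ) / 2 ^ (n - 1) = (1 / 2 : ℝ) ^ (n - 1) := by
      rw [div_pow, one_pow]
    have hkey : (2:ℝ) * (1 / 2) ^ n = (1 / 2 : ℝ) ^ (n - 1) := by
      have h0 : ((1:ℝ)/2) ^ ((n - 1) + 1) = (1/2)^(n-1) * (1/2) := pow_succ _ _
      rw [show n - 1 + 1 = n by omega] at h0
      rw [h0]; ring
    have htail : ∑' j : ℕ, (1 / 2 : ℝ) ^ (j + n) = (1 / 2 : ℝ) ^ (n - 1) := by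
      have h1 : ∑' j : ℕ, (1 / 2 : ℝ) ^ (j + n) = (∑' j : ℕ, (1 / 2 : ℝ) ^ j) * (1 / 2) ^ n := by
        rw [← tsum_mul_right]
        congr 1; ext j; rw [pow_add]
      rw [h1, tsum_geometric_two]
      exact hkey
    ext x
    simp only [Set.mem_preimage, Set.mem_Icc]
    constructor
    · rintro ⟨hlo, _⟩
      by_contra hxU
      -- show f x < (1/2)^(n-1)
      rw [hpow] at hlo
      have hsplit := (Summable.sum_add_tsum_nat_add n (hsummand x)).symm
      -- head: only j = n-1 can be nonzero
      have hhead : ∑ j ∈ Finset.range n, (1 / 2 : ℝ) ^ (j + 1) * φ (j + 1) x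
          = (1 / 2 : ℝ) ^ n * φ n x := by
        rw [Finset.sum_eq_single (n - 1)]
        · rw [show n - 1 + 1 = n by omega]
        · intro j hj hjne
          have hj' : j + 1 ≤ n - 1 := by
            simp only [Finset.mem_range] at hj
            omega
          have hxn : x ∉ U (2 * (j + 1)) := by
            intro hxn
            exact hxU (hmono' (2 * (j + 1)) (2 * n - 1) (by omega) (by omega) hxn)
          rw [(hφ0 (j + 1) (by omega) x).mpr hxn, mul_zero]
        · intro hno
          exact absurd (Finset.mem_range.mpr (by omega : n - 1 < n)) hno
      have hφlt : φ n x < 1 := by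
        rcases lt_or_eq_of_le (hφ01 n hn x).2 with hlt | he
        · exact hlt
        · exact absurd ((hφ1 n hn x).mp he) hxU
      have htail_le : ∑' j : ℕ, (1 / 2 : ℝ) ^ (j + n + 1) * φ (j + n + 1) x
          ≤ (1 / 2 : ℝ) ^ n := by
        have hs1 : Summable (fun j : ℕ => (1 / 2 : ℝ) ^ (j + n + 1) * φ (j + n + 1) x) :=
          (summable_nat_add_iff n).2 (hsummand x)
        calc ∑' j : ℕ, (1 / 2 : ℝ) ^ (j + n + 1) * φ (j + n + 1) x
            ≤ ∑' j : ℕ, (1 / 2 : ℝ) ^ (j + n + 1) := by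
              apply Summable.tsum_le_tsum _ hs1 _
              · intro j
                nlinarith [(hφ01 (j + n + 1) (by omega) x).1, (hφ01 (j + n + 1) (by omega) x).2,
                  pow_pos (by norm_num : (0:ℝ) < 1/2) (j + n + 1)]
              · exact (summable_nat_add_iff n).2 hsumgeo
          _ = (1/2) * ∑' j : ℕ, (1 / 2 : ℝ) ^ (j + n) := by
              rw [← tsum_mul_left]
              congr 1; ext j; rw [pow_succ]; ring
          _ = (1/2) * (1 / 2 : ℝ) ^ (n - 1) := by rw [htail]
          _ = (1 / 2 : ℝ) ^ n := by
              rw [← hkey]; ring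
      have hfx : f x = (1 / 2 : ℝ) ^ n * φ n x
          + ∑' j : ℕ, (1 / 2 : ℝ) ^ (j + n + 1) * φ (j + n + 1) x := by
        rw [show f x = ∑' k : ℕ, (1 / 2 : ℝ) ^ (k + 1) * φ (k + 1) x from rfl, hsplit, hhead]
      have : f x < (1 / 2 : ℝ) ^ (n - 1) := by
        rw [hfx]
        have h2 : (1 / 2 : ℝ) ^ (n - 1) = (1/2)^n + (1/2:ℝ)^n := by
          rw [← hkey]; ring
        rw [h2]
        have : (1 / 2 : ℝ) ^ n * φ n x < (1/2:ℝ)^n := by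
          nlinarith [pow_pos (by norm_num : (0:ℝ) < 1/2) n]
        linarith
      linarith
    · intro hxU
      refine ⟨?_, hf_le_one x⟩
      rw [hpow]
      -- tail from n-1 gives exactly (1/2)^(n-1)
      have hsplit := (Summable.sum_add_tsum_nat_add (n - 1) (hsummand x)).symm
      have htail_eq : ∑' j : ℕ, (1 / 2 : ℝ) ^ (j + (n - 1) + 1) * φ (j + (n - 1) + 1) x
          = (1 / 2 : ℝ) ^ (n - 1) := by
        have hone : ∀ j : ℕ, φ (j + (n - 1) + 1) x = 1 := by
          intro j
          apply (hφ1 (j + (n - 1) + 1) (by omega) x).mpr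
          exact hmono' (2 * n - 1) (2 * (j + (n - 1) + 1) - 1) (by omega) (by omega) hxU
        calc ∑' j : ℕ, (1 / 2 : ℝ) ^ (j + (n - 1) + 1) * φ (j + (n - 1) + 1) x
            = ∑' j : ℕ, (1 / 2 : ℝ) ^ (j + n) := by
              congr 1; ext j; rw [hone j, mul_one]
              congr 1; omega
          _ = (1 / 2 : ℝ) ^ (n - 1) := htail
      have hhead_nonneg : 0 ≤ ∑ j ∈ Finset.range (n - 1), (1 / 2 : ℝ) ^ (j + 1) * φ (j + 1) x :=
        Finset.sum_nonneg (fun j _ => hterm_nonneg j x)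
      have : f x = (∑ j ∈ Finset.range (n - 1), (1 / 2 : ℝ) ^ (j + 1) * φ (j + 1) x)
          + ∑' j : ℕ, (1 / 2 : ℝ) ^ (j + (n - 1) + 1) * φ (j + (n - 1) + 1) x := by
        rw [show f x = ∑' k : ℕ, (1 / 2 : ℝ) ^ (k + 1) * φ (k + 1) x from rfl, hsplit]
      rw [this, htail_eq]
      linarith
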